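/- arXiv:2309.08468 — 2 statements merged into one kernel-verified Lean document; each statement's English description precedes it below -/
import Mathlib

section
/- Proposition 1 (overlap-penalized optimality of the true parameters): Let P₀ be the distribution with density f₀(x) = η(θ⁰,π⁰) Σ_{j=1}^{k₀} 1_{Z_j(θ⁰,π⁰)}(x) π_j⁰ φ(x;θ_j⁰). Then for any number of clusters k, any Gaussian parameters θ = {θ_j}_{j=1}^k, and any weights π ∈ [0,1]^k summing to 1, we have P₀[Σ_{j=1}^{k₀} 1_{Z_j(θ⁰,π⁰)}(·) log(π_j⁰ φ(·;θ_j⁰))] − P₀[Σ_{j=1}^{k} 1_{Z_j(θ,π)}(·) log(π_j φ(·;θ_j))] ≥ log(η(θ,π)/η(θ⁰,π⁰)). -/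
open MeasureTheory Matrix
open scoped ENNReal NNReal

/-- The `p`-variate Gaussian density with mean `m` and covariance matrix `S`. -/
noncomputable def gpdf {p : ℕ} (m : Fin p → ℝ) (S : Matrix (Fin p) (Fin p) ℝ)
    (x : Fin p → ℝ) : ℝ :=
  (2 * Real.pi) ^ (-(p : ℝ) / 2) * S.det ^ (-(1 : ℝ) / 2) *
    Real.exp (-(1 / 2) * ((x - m) ⬝ᵥ (S⁻¹ *ᵥ (x - m))))


section quad
variable {p : ℕ}

lemma quad_continuous (A : Matrix (Fin p) (Fin p) ℝ) :
    Continuous (fun y : Fin p → ℝ => y ⬝ᵥ (A *ᵥ y)) := by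
  unfold dotProduct Matrix.mulVec
  refine continuous_finset_sum _ (fun i _ => ?_)
  exact (continuous_apply i).mul
    (continuous_finset_sum _ (fun j _ => continuous_const.mul (continuous_apply j)))

lemma quad_smul (A : Matrix (Fin p) (Fin p) ℝ) (c : ℝ) (y : Fin p → ℝ) :
    (c • y) ⬝ᵥ (A *ᵥ (c • y)) = c ^ 2 * (y ⬝ᵥ (A *ᵥ y)) := by
  rw [Matrix.mulVec_smul, smul_dotProduct, dotProduct_smul]
  simp only [smul_eq_mul]
  ring

lemma quad_pos {A : Matrix (Fin p) (Fin p) ℝ} (hA : A.PosDef) {y : Fin p → ℝ} (hy : y ≠ 0) :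
    0 < y ⬝ᵥ (A *ᵥ y) := by
  have := hA.dotProduct_mulVec_pos hy
  simpa using this

/-- lower bound for a positive definite quadratic form -/
lemma quad_lower {A : Matrix (Fin p) (Fin p) ℝ} (hA : A.PosDef) :
    ∃ ε > 0, ∀ y : Fin p → ℝ, ε * ‖y‖ ^ 2 ≤ y ⬝ᵥ (A *ᵥ y) := by
  rcases Nat.eq_zero_or_pos p with hp | hp
  · refine ⟨1, one_pos, fun y => ?_⟩
    subst hp
    have h0 : y = 0 := Subsingleton.elim _ _
    have h1 : ‖y‖ = 0 := by rw [h0, norm_zero]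
    have h2 : y ⬝ᵥ (A *ᵥ y) = 0 := by simp [dotProduct]
    rw [h1, h2]; norm_num
  · have hne : Nonempty (Fin p) := ⟨⟨0, hp⟩⟩
    have hnt : Nontrivial (Fin p → ℝ) := by
      refine ⟨0, Function.const _ 1, ?_⟩
      intro h
      have := congrFun h ⟨0, hp⟩
      simp [Function.const] at this
    have hsph : (Metric.sphere (0 : Fin p → ℝ) 1).Nonempty :=
      NormedSpace.sphere_nonempty.2 zero_le_one
    obtain ⟨y₀, hy₀, hmin⟩ := (isCompact_sphere (0 : Fin p → ℝ) 1).exists_isMinOn hsph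
      (quad_continuous A).continuousOn
    have hy₀n : ‖y₀‖ = 1 := by simpa using hy₀
    have hy₀ne : y₀ ≠ 0 := by intro h; rw [h] at hy₀n; simp at hy₀n
    refine ⟨y₀ ⬝ᵥ (A *ᵥ y₀), quad_pos hA hy₀ne, fun y => ?_⟩
    rcases eq_or_ne y 0 with rfl | hy
    · simp
    · have hny : 0 < ‖y‖ := norm_pos_iff.2 hy
      set u := ‖y‖⁻¹ • y with hu
      have hun : u ∈ Metric.sphere (0 : Fin p → ℝ) 1 := by
        simp [hu, norm_smul, abs_of_pos (inv_pos.2 hny), inv_mul_cancel₀ hny.ne']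
      have h1 : y₀ ⬝ᵥ (A *ᵥ y₀) ≤ u ⬝ᵥ (A *ᵥ u) := hmin hun
      have h2 : y = ‖y‖ • u := by
        rw [hu, smul_smul, mul_inv_cancel₀ hny.ne', one_smul]
      have h3 : y ⬝ᵥ (A *ᵥ y) = ‖y‖ ^ 2 * (u ⬝ᵥ (A *ᵥ u)) := by
        conv_lhs => rw [h2]
        rw [quad_smul]
      rw [h3]
      nlinarith [sq_nonneg ‖y‖]

/-- upper bound for any quadratic form -/
lemma quad_upper (A : Matrix (Fin p) (Fin p) ℝ) (y : Fin p → ℝ) :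
    |y ⬝ᵥ (A *ᵥ y)| ≤ (∑ i, ∑ j, |A i j|) * ‖y‖ ^ 2 := by
  unfold dotProduct Matrix.mulVec
  calc |∑ i, y i * ∑ j, A i j * y j| ≤ ∑ i, |y i * ∑ j, A i j * y j| :=
        Finset.abs_sum_le_sum_abs _ _
    _ ≤ ∑ i, ∑ j, |A i j| * ‖y‖ ^ 2 := by
        refine Finset.sum_le_sum (fun i _ => ?_)
        rw [abs_mul]
        calc |y i| * |∑ j, A i j * y j| ≤ ‖y‖ * ∑ j, |A i j * y j| := by
              refine mul_le_mul ?_ (Finset.abs_sum_le_sum_abs _ _) (abs_nonneg _) (norm_nonneg _)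
              simpa [Real.norm_eq_abs] using norm_le_pi_norm y i
          _ ≤ ‖y‖ * ∑ j, |A i j| * ‖y‖ := by
              refine mul_le_mul_of_nonneg_left ?_ (norm_nonneg _)
              refine Finset.sum_le_sum (fun j _ => ?_)
              rw [abs_mul]
              refine mul_le_mul_of_nonneg_left ?_ (abs_nonneg _)
              simpa [Real.norm_eq_abs] using norm_le_pi_norm y j
          _ = ∑ j, |A i j| * ‖y‖ ^ 2 := by rw [Finset.mul_sum]; refine Finset.sum_congr rfl ?_; intros; ring
    _ = (∑ i, ∑ j, |A i j|) * ‖y‖ ^ 2 := by simp [Finset.sum_mul]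

end quad

section gpdfsec
variable {p : ℕ} {m : Fin p → ℝ} {S : Matrix (Fin p) (Fin p) ℝ}

lemma gpdf_pos (hS : S.PosDef) (x : Fin p → ℝ) : 0 < gpdf m S x := by
  unfold gpdf
  have h1 : (0:ℝ) < 2 * Real.pi := by positivity
  have h2 : (0:ℝ) < S.det := hS.det_pos
  positivity

lemma gpdf_continuous (m : Fin p → ℝ) (S : Matrix (Fin p) (Fin p) ℝ) :
    Continuous (gpdf m S) := by
  unfold gpdf
  refine continuous_const.mul (Real.continuous_exp.comp (continuous_const.mul ?_))
  exact (quad_continuous S⁻¹).comp (continuous_id.sub continuous_const)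

lemma gpdf_measurable (m : Fin p → ℝ) (S : Matrix (Fin p) (Fin p) ℝ) :
    Measurable (gpdf m S) := (gpdf_continuous m S).measurable

/-- Gaussian tail bound : gpdf is dominated by `K * exp (-c‖x‖²)`. -/
lemma gpdf_bound (hS : S.PosDef) :
    ∃ c > 0, ∃ K : ℝ, ∀ x, gpdf m S x ≤ K * Real.exp (-c * ‖x‖ ^ 2) := by
  obtain ⟨ε, hε, hq⟩ := quad_lower hS.inv
  refine ⟨ε / 4, by positivity,
    (2 * Real.pi) ^ (-(p : ℝ) / 2) * S.det ^ (-(1 : ℝ) / 2) * Real.exp (ε / 2 * ‖m‖ ^ 2),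
    fun x => ?_⟩
  unfold gpdf
  have h1 : (0:ℝ) < 2 * Real.pi := by positivity
  have h2 : (0:ℝ) < S.det := hS.det_pos
  have hK : (0:ℝ) ≤ (2 * Real.pi) ^ (-(p : ℝ) / 2) * S.det ^ (-(1 : ℝ) / 2) := by positivity
  have hq' := hq (x - m)
  have hnorm : ‖x‖ ≤ ‖x - m‖ + ‖m‖ := by
    calc ‖x‖ = ‖x - m + m‖ := by ring_nf
      _ ≤ ‖x - m‖ + ‖m‖ := norm_add_le _ _
  have hx2 : ‖x‖ ^ 2 ≤ 2 * ‖x - m‖ ^ 2 + 2 * ‖m‖ ^ 2 := by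
    have hh := mul_self_le_mul_self (norm_nonneg x) hnorm
    nlinarith [sq_nonneg (‖x - m‖ - ‖m‖), hh]
  have key : Real.exp (-(1 / 2) * ((x - m) ⬝ᵥ (S⁻¹ *ᵥ (x - m)))) ≤
      Real.exp (ε / 2 * ‖m‖ ^ 2) * Real.exp (-(ε / 4) * ‖x‖ ^ 2) := by
    rw [← Real.exp_add, Real.exp_le_exp]
    nlinarith [norm_nonneg (x - m), norm_nonneg m]
  calc (2 * Real.pi) ^ (-(p : ℝ) / 2) * S.det ^ (-(1 : ℝ) / 2) *
        Real.exp (-(1 / 2) * ((x - m) ⬝ᵥ (S⁻¹ *ᵥ (x - m)))) ≤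
      (2 * Real.pi) ^ (-(p : ℝ) / 2) * S.det ^ (-(1 : ℝ) / 2) *
        (Real.exp (ε / 2 * ‖m‖ ^ 2) * Real.exp (-(ε / 4) * ‖x‖ ^ 2)) :=
        mul_le_mul_of_nonneg_left key hK
    _ = (2 * Real.pi) ^ (-(p : ℝ) / 2) * S.det ^ (-(1 : ℝ) / 2) * Real.exp (ε / 2 * ‖m‖ ^ 2) *
        Real.exp (-(ε / 4) * ‖x‖ ^ 2) := by ring

/-- exp(-c‖x‖²) is integrable on `Fin p → ℝ`. -/
lemma integrable_exp_neg_norm_sq {c : ℝ} (hc : 0 < c) :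
    Integrable (fun x : Fin p → ℝ => Real.exp (-c * ‖x‖ ^ 2)) := by
  rcases Nat.eq_zero_or_pos p with hp | hp
  · subst hp
    have hfin : (volume : Measure (Fin 0 → ℝ)) Set.univ = 1 := by
      simp [MeasureTheory.volume_pi, Measure.pi_univ]
    have : IsFiniteMeasure (volume : Measure (Fin 0 → ℝ)) :=
      ⟨by rw [hfin]; exact ENNReal.one_lt_top⟩
    have heq : (fun x : Fin 0 → ℝ => Real.exp (-c * ‖x‖ ^ 2)) = fun _ => (1:ℝ) := by
      funext x
      have : x = 0 := Subsingleton.elim _ _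
      rw [this, norm_zero]; norm_num
    rw [heq]
    exact integrable_const 1
  · have hcp : 0 < c / p := by positivity
    have hprod : Integrable (fun x : Fin p → ℝ => ∏ i, Real.exp (-(c / p) * (x i) ^ 2)) :=
      Integrable.fintype_prod (fun _ => integrable_exp_neg_mul_sq hcp)
    refine hprod.mono ((Real.continuous_exp.comp
      (continuous_const.mul ((continuous_norm).pow 2))).aestronglyMeasurable) ?_
    refine Filter.Eventually.of_forall (fun x => ?_)
    rw [Real.norm_eq_abs, abs_of_pos (Real.exp_pos _), Real.norm_eq_abs, ← Real.exp_sum,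
      abs_of_pos (Real.exp_pos _), Real.exp_le_exp]
    have hsum : ∑ i, (x i) ^ 2 ≤ (p : ℝ) * ‖x‖ ^ 2 := by
      calc ∑ i, (x i) ^ 2 ≤ ∑ _i : Fin p, ‖x‖ ^ 2 := by
            refine Finset.sum_le_sum (fun i _ => ?_)
            have h := norm_le_pi_norm x i
            rw [Real.norm_eq_abs] at h
            calc (x i) ^ 2 = |x i| ^ 2 := (sq_abs _).symm
              _ ≤ ‖x‖ ^ 2 := pow_le_pow_left₀ (abs_nonneg _) h 2
        _ = (p : ℝ) * ‖x‖ ^ 2 := by simp [mul_comm]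
    have : ∑ i, -(c / p) * (x i) ^ 2 = -(c / p) * ∑ i, (x i) ^ 2 := by
      rw [Finset.mul_sum]
    rw [this]
    have hp' : (0:ℝ) < p := by exact_mod_cast hp
    rw [neg_mul, neg_mul, neg_le_neg_iff]
    calc c * ‖x‖ ^ 2 = (c / p) * ((p:ℝ) * ‖x‖ ^ 2) := by field_simp
      _ ≥ (c / p) * ∑ i, (x i) ^ 2 := by
          exact mul_le_mul_of_nonneg_left hsum hcp.le

/-- (1+‖x‖²)·exp(-c‖x‖²) is integrable. -/
lemma integrable_one_add_norm_sq_mul_exp {c : ℝ} (hc : 0 < c) :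
    Integrable (fun x : Fin p → ℝ => (1 + ‖x‖ ^ 2) * Real.exp (-c * ‖x‖ ^ 2)) := by
  have hM : ∀ t : ℝ, 0 ≤ t → (1 + t) * Real.exp (-c * t) ≤ (1 + 2 / c) * Real.exp (-(c/2) * t) := by
    intro t ht
    have h2 : 1 + t ≤ (1 + 2 / c) * Real.exp ((c/2) * t) := by
      have h3 := Real.add_one_le_exp ((c/2) * t)
      have h4 : (0:ℝ) < 2 / c := by positivity
      have h5 := mul_le_mul_of_nonneg_left h3 h4.le
      have h6 : (2/c) * ((c/2) * t) = t := by field_simp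
      nlinarith [mul_nonneg hc.le ht]
    calc (1 + t) * Real.exp (-c * t) ≤ ((1 + 2 / c) * Real.exp ((c/2) * t)) * Real.exp (-c * t) :=
          mul_le_mul_of_nonneg_right h2 (Real.exp_pos _).le
      _ = (1 + 2 / c) * Real.exp (-(c/2) * t) := by
          rw [mul_assoc, ← Real.exp_add]
          congr 2
          ring
  have hint : Integrable (fun x : Fin p → ℝ => (1 + 2 / c) * Real.exp (-(c/2) * ‖x‖ ^ 2)) :=
    (integrable_exp_neg_norm_sq (by positivity : (0:ℝ) < c/2)).const_mul _
  refine hint.mono ?_ ?_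
  · exact ((continuous_const.add ((continuous_norm).pow 2)).mul
      (Real.continuous_exp.comp (continuous_const.mul ((continuous_norm).pow 2)))).aestronglyMeasurable
  · refine Filter.Eventually.of_forall (fun x => ?_)
    have h0 : (0:ℝ) ≤ (1 + ‖x‖ ^ 2) * Real.exp (-c * ‖x‖ ^ 2) := by positivity
    have h1 : (0:ℝ) ≤ (1 + 2 / c) * Real.exp (-(c/2) * ‖x‖ ^ 2) := by positivity
    rw [Real.norm_eq_abs, abs_of_nonneg h0, Real.norm_eq_abs, abs_of_nonneg h1]
    exact hM _ (by positivity)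

end gpdfsec

section gpdfint
variable {p : ℕ} {m : Fin p → ℝ} {S : Matrix (Fin p) (Fin p) ℝ}

lemma integrable_gpdf_mul_one_add_norm_sq (hS : S.PosDef) :
    Integrable (fun x : Fin p → ℝ => gpdf m S x * (1 + ‖x‖ ^ 2)) := by
  obtain ⟨c, hc, K, hK⟩ := gpdf_bound (m := m) hS
  have hint : Integrable (fun x : Fin p → ℝ => K * ((1 + ‖x‖ ^ 2) * Real.exp (-c * ‖x‖ ^ 2))) :=
    (integrable_one_add_norm_sq_mul_exp hc).const_mul K
  refine hint.mono ?_ ?_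
  · exact ((gpdf_continuous m S).mul
      (continuous_const.add ((continuous_norm).pow 2))).aestronglyMeasurable
  · refine Filter.Eventually.of_forall (fun x => ?_)
    have h0 : (0:ℝ) < 1 + ‖x‖ ^ 2 := by positivity
    have h1 : (0:ℝ) ≤ gpdf m S x * (1 + ‖x‖ ^ 2) := by
      have := (gpdf_pos (m := m) hS x).le
      positivity
    have h2 : gpdf m S x * (1 + ‖x‖ ^ 2) ≤ K * ((1 + ‖x‖ ^ 2) * Real.exp (-c * ‖x‖ ^ 2)) := by
      have := hK x
      nlinarith [Real.exp_pos (-c * ‖x‖ ^ 2), (gpdf_pos (m := m) hS x)]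
    rw [Real.norm_eq_abs, abs_of_nonneg h1, Real.norm_eq_abs, abs_of_nonneg (h1.trans h2)]
    exact h2

lemma integrable_gpdf (hS : S.PosDef) : Integrable (gpdf m S) := by
  refine (integrable_gpdf_mul_one_add_norm_sq (m := m) hS).mono
    (gpdf_continuous m S).aestronglyMeasurable (Filter.Eventually.of_forall (fun x => ?_))
  have h1 : (0:ℝ) < gpdf m S x := gpdf_pos hS x
  have h2 : gpdf m S x ≤ gpdf m S x * (1 + ‖x‖ ^ 2) := by nlinarith [sq_nonneg ‖x‖]
  rw [Real.norm_eq_abs, abs_of_nonneg h1.le, Real.norm_eq_abs, abs_of_nonneg (h1.le.trans h2)]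
  exact h2

/-- |log (w * gpdf)| is bounded by a quadratic. -/
lemma log_gpdf_bound (hS : S.PosDef) {wj : ℝ} (hwj : 0 < wj) :
    ∃ C : ℝ, ∀ x, |Real.log (wj * gpdf m S x)| ≤ C * (1 + ‖x‖ ^ 2) := by
  have h1 : (0:ℝ) < 2 * Real.pi := by positivity
  have h2 : (0:ℝ) < S.det := hS.det_pos
  set K := (2 * Real.pi) ^ (-(p : ℝ) / 2) * S.det ^ (-(1 : ℝ) / 2) with hKdef
  have hK : 0 < K := by positivity
  set B := ∑ i, ∑ j, |S⁻¹ i j| with hB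
  have hB0 : 0 ≤ B := by
    refine Finset.sum_nonneg (fun i _ => Finset.sum_nonneg (fun j _ => abs_nonneg _))
  refine ⟨|Real.log (wj * K)| + B * (1 + ‖m‖ ^ 2), fun x => ?_⟩
  have hlog : Real.log (wj * gpdf m S x) =
      Real.log (wj * K) + (-(1 / 2) * ((x - m) ⬝ᵥ (S⁻¹ *ᵥ (x - m)))) := by
    unfold gpdf
    rw [hKdef, show wj * ((2 * Real.pi) ^ (-(p : ℝ) / 2) * S.det ^ (-(1 : ℝ) / 2) *
      Real.exp (-(1 / 2) * ((x - m) ⬝ᵥ (S⁻¹ *ᵥ (x - m))))) =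
      (wj * ((2 * Real.pi) ^ (-(p : ℝ) / 2) * S.det ^ (-(1 : ℝ) / 2))) *
      Real.exp (-(1 / 2) * ((x - m) ⬝ᵥ (S⁻¹ *ᵥ (x - m)))) from by ring,
      Real.log_mul (by positivity) (Real.exp_ne_zero _), Real.log_exp]
  rw [hlog]
  have hq := quad_upper S⁻¹ (x - m)
  have hnorm : ‖x - m‖ ≤ ‖x‖ + ‖m‖ := norm_sub_le _ _
  have hx2 : ‖x - m‖ ^ 2 ≤ 2 * ‖x‖ ^ 2 + 2 * ‖m‖ ^ 2 := by
    have hh := mul_self_le_mul_self (norm_nonneg (x - m)) hnorm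
    nlinarith [sq_nonneg (‖x‖ - ‖m‖), hh]
  have habs : |Real.log (wj * K) + (-(1 / 2) * ((x - m) ⬝ᵥ (S⁻¹ *ᵥ (x - m))))| ≤
      |Real.log (wj * K)| + (1 / 2) * |(x - m) ⬝ᵥ (S⁻¹ *ᵥ (x - m))| := by
    calc _ ≤ |Real.log (wj * K)| + |(-(1 / 2) * ((x - m) ⬝ᵥ (S⁻¹ *ᵥ (x - m))))| := abs_add_le _ _
      _ = _ := by rw [abs_mul]; norm_num
  refine habs.trans ?_
  have hq2 : |(x - m) ⬝ᵥ (S⁻¹ *ᵥ (x - m))| ≤ B * (2 * ‖x‖ ^ 2 + 2 * ‖m‖ ^ 2) :=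
    hq.trans (mul_le_mul_of_nonneg_left hx2 hB0)
  nlinarith [abs_nonneg (Real.log (wj * K)), sq_nonneg ‖x‖, sq_nonneg ‖m‖,
    mul_nonneg hB0 (sq_nonneg ‖x‖), mul_nonneg hB0 (sq_nonneg ‖m‖)]

end gpdfint

/-- The weighted maximum-likelihood assignment region `Z_j(θ,π)`, with ties assigned to the
smallest index, so that the `Z_j` partition `ℝᵖ`. -/
noncomputable def Zpart {p k : ℕ} (w : Fin k → ℝ) (m : Fin k → Fin p → ℝ)
    (S : Fin k → Matrix (Fin p) (Fin p) ℝ) (j : Fin k) : Set (Fin p → ℝ) :=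
  {x | (∀ r, w r * gpdf (m r) (S r) x ≤ w j * gpdf (m j) (S j) x) ∧
    ∀ r < j, ¬ ∀ s, w s * gpdf (m s) (S s) x ≤ w r * gpdf (m r) (S r) x}

/-- The denominator `∑ⱼ πⱼ ∫_{Z_j(θ,π)} φ(x;θⱼ) dx` of the normalizing constant. -/
noncomputable def etaDen {p k : ℕ} (w : Fin k → ℝ) (m : Fin k → Fin p → ℝ)
    (S : Fin k → Matrix (Fin p) (Fin p) ℝ) : ℝ :=
  ∑ j, w j * ∫ x in Zpart w m S j, gpdf (m j) (S j) x

/-- The normalizing constant `η(θ,π)`. -/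
noncomputable def eta {p k : ℕ} (w : Fin k → ℝ) (m : Fin k → Fin p → ℝ)
    (S : Fin k → Matrix (Fin p) (Fin p) ℝ) : ℝ :=
  1 / etaDen w m S

/-- The truncated-Gaussian clustering density
`f₀(x) = η(θ,π) ∑ⱼ 1_{Z_j(θ,π)}(x) πⱼ φ(x;θⱼ)`. -/
noncomputable def clusterDensity {p k : ℕ} (w : Fin k → ℝ) (m : Fin k → Fin p → ℝ)
    (S : Fin k → Matrix (Fin p) (Fin p) ℝ) (x : Fin p → ℝ) : ℝ :=
  eta w m S * ∑ j, Set.indicator (Zpart w m S j) (fun y => w j * gpdf (m j) (S j) y) x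

/-- the unnormalized mixture `g(x) = ∑ⱼ 1_{Z_j} πⱼ φⱼ(x)` -/
noncomputable def gmix {p k : ℕ} (w : Fin k → ℝ) (m : Fin k → Fin p → ℝ)
    (S : Fin k → Matrix (Fin p) (Fin p) ℝ) (x : Fin p → ℝ) : ℝ :=
  ∑ j, Set.indicator (Zpart w m S j) (fun y => w j * gpdf (m j) (S j) y) x

lemma clusterDensity_eq_eta_mul_gmix {p k : ℕ} (w : Fin k → ℝ) (m : Fin k → Fin p → ℝ)
    (S : Fin k → Matrix (Fin p) (Fin p) ℝ) (x : Fin p → ℝ) :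
    clusterDensity w m S x = eta w m S * gmix w m S x := rfl

section part
variable {p k : ℕ} {w : Fin k → ℝ} {m : Fin k → Fin p → ℝ}
  {S : Fin k → Matrix (Fin p) (Fin p) ℝ}

lemma measurableSet_Zpart (w : Fin k → ℝ) (m : Fin k → Fin p → ℝ)
    (S : Fin k → Matrix (Fin p) (Fin p) ℝ) (j : Fin k) :
    MeasurableSet (Zpart w m S j) := by
  have hmeas : ∀ r s : Fin k, MeasurableSet
      {x : Fin p → ℝ | w r * gpdf (m r) (S r) x ≤ w s * gpdf (m s) (S s) x} := by
    intro r s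
    exact measurableSet_le ((gpdf_measurable (m r) (S r)).const_mul _)
      ((gpdf_measurable (m s) (S s)).const_mul _)
  have h1 : Zpart w m S j =
      (⋂ r, {x : Fin p → ℝ | w r * gpdf (m r) (S r) x ≤ w j * gpdf (m j) (S j) x}) ∩
      (⋂ r ∈ {r | r < j},
        (⋂ s, {x : Fin p → ℝ | w s * gpdf (m s) (S s) x ≤ w r * gpdf (m r) (S r) x})ᶜ) := by
    ext x
    simp only [Zpart, Set.mem_setOf_eq, Set.mem_inter_iff, Set.mem_iInter, Set.mem_compl_iff]
  rw [h1]
  exact (MeasurableSet.iInter (fun r => hmeas r j)).inter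
    (MeasurableSet.biInter (Set.to_countable _)
      (fun r _ => (MeasurableSet.iInter (fun s => hmeas s r)).compl))

lemma exists_mem_Zpart (w : Fin k → ℝ) (m : Fin k → Fin p → ℝ)
    (S : Fin k → Matrix (Fin p) (Fin p) ℝ) [Nonempty (Fin k)] (x : Fin p → ℝ) :
    ∃ j, x ∈ Zpart w m S j := by
  classical
  set F : Fin k → ℝ := fun r => w r * gpdf (m r) (S r) x with hF
  obtain ⟨j₀, _, hj₀⟩ := Finset.exists_max_image Finset.univ F Finset.univ_nonempty
  set T : Finset (Fin k) := Finset.univ.filter (fun j => ∀ r, F r ≤ F j) with hT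
  have hTne : T.Nonempty := ⟨j₀, by
    rw [hT, Finset.mem_filter]
    exact ⟨Finset.mem_univ _, fun r => hj₀ r (Finset.mem_univ r)⟩⟩
  refine ⟨T.min' hTne, ?_, ?_⟩
  · exact fun r => (Finset.mem_filter.mp (T.min'_mem hTne)).2 r
  · intro r hr hall
    have hrT : r ∈ T := by rw [hT, Finset.mem_filter]; exact ⟨Finset.mem_univ r, hall⟩
    exact absurd (T.min'_le r hrT) (not_le.2 hr)

lemma Zpart_unique {i j : Fin k} {x : Fin p → ℝ}
    (hi : x ∈ Zpart w m S i) (hj : x ∈ Zpart w m S j) : i = j := by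
  by_contra hne
  rcases lt_or_gt_of_ne hne with h | h
  · exact hj.2 i h hi.1
  · exact hi.2 j h hj.1

lemma Zpart_disjoint : Pairwise (Function.onFun Disjoint (Zpart w m S)) := by
  intro i j hne
  rw [Function.onFun, Set.disjoint_left]
  intro x hi hj
  exact hne (Zpart_unique hi hj)

lemma gmix_eq_on_Zpart {j : Fin k} {x : Fin p → ℝ} (hx : x ∈ Zpart w m S j) :
    gmix w m S x = w j * gpdf (m j) (S j) x := by
  unfold gmix
  rw [Finset.sum_eq_single j]
  · rw [Set.indicator_of_mem hx]
  · intro i _ hne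
    rw [Set.indicator_of_notMem]
    intro hxi
    exact hne (Zpart_unique hxi hx)
  · intro h; exact absurd (Finset.mem_univ j) h

lemma exists_pos_weight (hw : ∀ j, 0 ≤ w j) (hw1 : (∑ j, w j) = 1) : ∃ r, 0 < w r := by
  by_contra h
  push_neg at h
  have : (∑ j, w j) = 0 :=
    Finset.sum_eq_zero (fun j _ => le_antisymm (h j) (hw j))
  rw [this] at hw1; norm_num at hw1

lemma nonempty_of_sum_one (hw1 : (∑ j, w j) = 1) : Nonempty (Fin k) := by
  by_contra h
  rw [not_nonempty_iff] at h
  rw [Finset.sum_of_isEmpty] at hw1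
  norm_num at hw1

lemma wpos_of_mem_Zpart (hw : ∀ j, 0 ≤ w j) (hw1 : (∑ j, w j) = 1) (hS : ∀ j, (S j).PosDef)
    {j : Fin k} {x : Fin p → ℝ} (hx : x ∈ Zpart w m S j) : 0 < w j := by
  obtain ⟨r, hr⟩ := exists_pos_weight hw hw1
  have h1 : 0 < w r * gpdf (m r) (S r) x := mul_pos hr (gpdf_pos (hS r) x)
  have h2 := hx.1 r
  rcases lt_or_eq_of_le (hw j) with h | h
  · exact h
  · exfalso
    rw [← h, zero_mul] at h2
    exact absurd (h1.trans_le h2) (lt_irrefl 0)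

lemma gmix_pos (hw : ∀ j, 0 ≤ w j) (hw1 : (∑ j, w j) = 1) (hS : ∀ j, (S j).PosDef)
    (x : Fin p → ℝ) : 0 < gmix w m S x := by
  have : Nonempty (Fin k) := nonempty_of_sum_one hw1
  obtain ⟨j, hj⟩ := exists_mem_Zpart w m S x
  rw [gmix_eq_on_Zpart hj]
  exact mul_pos (wpos_of_mem_Zpart hw hw1 hS hj) (gpdf_pos (hS j) x)

lemma gmix_measurable (w : Fin k → ℝ) (m : Fin k → Fin p → ℝ)
    (S : Fin k → Matrix (Fin p) (Fin p) ℝ) : Measurable (gmix w m S) := by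
  unfold gmix
  refine Finset.measurable_sum _ (fun j _ => ?_)
  exact (((gpdf_measurable (m j) (S j)).const_mul _).indicator (measurableSet_Zpart w m S j))

lemma integrable_gmix (hS : ∀ j, (S j).PosDef) : Integrable (gmix w m S) := by
  unfold gmix
  refine integrable_finset_sum _ (fun j _ => ?_)
  exact (((integrable_gpdf (hS j)).const_mul (w j)).indicator (measurableSet_Zpart w m S j))

lemma integral_gmix (hS : ∀ j, (S j).PosDef) :
    ∫ x, gmix w m S x = etaDen w m S := by
  unfold gmix etaDen
  rw [integral_finset_sum _ (fun j _ =>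
    (((integrable_gpdf (hS j)).const_mul (w j)).indicator (measurableSet_Zpart w m S j)))]
  refine Finset.sum_congr rfl (fun j _ => ?_)
  rw [integral_indicator (measurableSet_Zpart w m S j), integral_const_mul]

lemma etaDen_pos (hw : ∀ j, 0 ≤ w j) (hw1 : (∑ j, w j) = 1) (hS : ∀ j, (S j).PosDef) :
    0 < etaDen w m S := by
  rw [← integral_gmix hS]
  rw [integral_pos_iff_support_of_nonneg
    (fun x => (gmix_pos hw hw1 hS x).le) (integrable_gmix hS)]
  have hsupp : Function.support (gmix w m S) = Set.univ := by
    ext x; simp [Function.mem_support, (gmix_pos hw hw1 hS x).ne']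
  rw [hsupp]
  exact IsOpen.measure_pos _ isOpen_univ Set.univ_nonempty

end part

section cdens
variable {p k : ℕ} {w : Fin k → ℝ} {m : Fin k → Fin p → ℝ}
  {S : Fin k → Matrix (Fin p) (Fin p) ℝ}

lemma eta_pos (hw : ∀ j, 0 ≤ w j) (hw1 : (∑ j, w j) = 1) (hS : ∀ j, (S j).PosDef) :
    0 < eta w m S := by
  unfold eta
  exact div_pos one_pos (etaDen_pos hw hw1 hS)

lemma clusterDensity_pos (hw : ∀ j, 0 ≤ w j) (hw1 : (∑ j, w j) = 1) (hS : ∀ j, (S j).PosDef)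
    (x : Fin p → ℝ) : 0 < clusterDensity w m S x := by
  rw [clusterDensity_eq_eta_mul_gmix]
  exact mul_pos (eta_pos hw hw1 hS) (gmix_pos hw hw1 hS x)

lemma clusterDensity_measurable (w : Fin k → ℝ) (m : Fin k → Fin p → ℝ)
    (S : Fin k → Matrix (Fin p) (Fin p) ℝ) : Measurable (clusterDensity w m S) :=
  (gmix_measurable w m S).const_mul _

lemma integrable_clusterDensity (hS : ∀ j, (S j).PosDef) :
    Integrable (clusterDensity w m S) :=
  (integrable_gmix hS).const_mul _

lemma integral_clusterDensity (hw : ∀ j, 0 ≤ w j) (hw1 : (∑ j, w j) = 1)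
    (hS : ∀ j, (S j).PosDef) : ∫ x, clusterDensity w m S x = 1 := by
  have hrw : clusterDensity w m S = fun x => eta w m S * gmix w m S x := rfl
  rw [hrw, integral_const_mul, integral_gmix hS]
  unfold eta
  rw [one_div, inv_mul_cancel₀ (etaDen_pos hw hw1 hS).ne']

/-- |log gmix| has a quadratic bound. -/
lemma log_gmix_bound (hw : ∀ j, 0 ≤ w j) (hw1 : (∑ j, w j) = 1) (hS : ∀ j, (S j).PosDef) :
    ∃ C : ℝ, ∀ x, |Real.log (gmix w m S x)| ≤ C * (1 + ‖x‖ ^ 2) := by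
  have hC : ∀ i : Fin k, ∃ C : ℝ, 0 ≤ C ∧
      ∀ x, 0 < w i → |Real.log (w i * gpdf (m i) (S i) x)| ≤ C * (1 + ‖x‖ ^ 2) := by
    intro i
    by_cases hwi : 0 < w i
    · obtain ⟨C, hC⟩ := log_gpdf_bound (m := m i) (hS i) hwi
      have hC0 : 0 ≤ C := by
        have := hC 0
        have h2 : (0:ℝ) ≤ C * (1 + ‖(0 : Fin p → ℝ)‖ ^ 2) := le_trans (abs_nonneg _) this
        rw [norm_zero] at h2; nlinarith
      exact ⟨C, hC0, fun x _ => hC x⟩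
    · exact ⟨0, le_refl 0, fun x hx => absurd hx hwi⟩
  choose C hC0 hCb using hC
  refine ⟨∑ i, C i, fun x => ?_⟩
  have : Nonempty (Fin k) := nonempty_of_sum_one hw1
  obtain ⟨j, hj⟩ := exists_mem_Zpart w m S x
  rw [gmix_eq_on_Zpart hj]
  have hwj := wpos_of_mem_Zpart hw hw1 hS hj
  calc |Real.log (w j * gpdf (m j) (S j) x)| ≤ C j * (1 + ‖x‖ ^ 2) := hCb j x hwj
    _ ≤ (∑ i, C i) * (1 + ‖x‖ ^ 2) := by
        refine mul_le_mul_of_nonneg_right ?_ (by positivity)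
        exact Finset.single_le_sum (fun i _ => hC0 i) (Finset.mem_univ j)

lemma gmix_le_sum (hw : ∀ j, 0 ≤ w j) (hS : ∀ j, (S j).PosDef) (x : Fin p → ℝ) :
    gmix w m S x ≤ ∑ j, w j * gpdf (m j) (S j) x := by
  unfold gmix
  refine Finset.sum_le_sum (fun j _ => ?_)
  refine Set.indicator_le_self' (fun y _ => ?_) x
  exact mul_nonneg (hw j) (gpdf_pos (hS j) y).le

end cdens

section gibbs
variable {p k₀ k : ℕ}
  {w₀ : Fin k₀ → ℝ} {m₀ : Fin k₀ → Fin p → ℝ} {S₀ : Fin k₀ → Matrix (Fin p) (Fin p) ℝ}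
  {w : Fin k → ℝ} {m : Fin k → Fin p → ℝ} {S : Fin k → Matrix (Fin p) (Fin p) ℝ}

lemma integrable_gmix_mul_log
    (hw₀ : ∀ j, 0 ≤ w₀ j) (hS₀ : ∀ j, (S₀ j).PosDef)
    (hw : ∀ j, 0 ≤ w j) (hw1 : (∑ j, w j) = 1) (hS : ∀ j, (S j).PosDef) :
    Integrable (fun x => gmix w₀ m₀ S₀ x * Real.log (gmix w m S x)) := by
  obtain ⟨C, hCb⟩ := log_gmix_bound (m := m) hw hw1 hS
  have hC0 : 0 ≤ C := by
    have h1 := hCb 0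
    have h2 : (0:ℝ) ≤ C * (1 + ‖(0 : Fin p → ℝ)‖ ^ 2) := le_trans (abs_nonneg _) h1
    rw [norm_zero] at h2; nlinarith
  have hH : Integrable (fun x => ∑ j, (w₀ j * C) * (gpdf (m₀ j) (S₀ j) x * (1 + ‖x‖ ^ 2))) :=
    integrable_finset_sum _ (fun j _ =>
      (integrable_gpdf_mul_one_add_norm_sq (m := m₀ j) (hS₀ j)).const_mul _)
  refine hH.mono ?_ ?_
  · exact ((gmix_measurable w₀ m₀ S₀).mul
      (Real.measurable_log.comp (gmix_measurable w m S))).aestronglyMeasurable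
  · refine Filter.Eventually.of_forall (fun x => ?_)
    have hg₀ : 0 ≤ gmix w₀ m₀ S₀ x := by
      unfold gmix
      refine Finset.sum_nonneg (fun j _ => ?_)
      exact Set.indicator_nonneg (fun y _ => mul_nonneg (hw₀ j) (gpdf_pos (hS₀ j) y).le) x
    have h1 : ‖gmix w₀ m₀ S₀ x * Real.log (gmix w m S x)‖ =
        gmix w₀ m₀ S₀ x * |Real.log (gmix w m S x)| := by
      rw [Real.norm_eq_abs, abs_mul, abs_of_nonneg hg₀]
    rw [h1]
    have h2 : gmix w₀ m₀ S₀ x * |Real.log (gmix w m S x)| ≤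
        (∑ j, w₀ j * gpdf (m₀ j) (S₀ j) x) * (C * (1 + ‖x‖ ^ 2)) := by
      refine mul_le_mul (gmix_le_sum hw₀ hS₀ x) (hCb x) (abs_nonneg _) ?_
      exact Finset.sum_nonneg (fun j _ => mul_nonneg (hw₀ j) (gpdf_pos (hS₀ j) x).le)
    have h3 : (∑ j, w₀ j * gpdf (m₀ j) (S₀ j) x) * (C * (1 + ‖x‖ ^ 2)) =
        ∑ j, (w₀ j * C) * (gpdf (m₀ j) (S₀ j) x * (1 + ‖x‖ ^ 2)) := by
      rw [Finset.sum_mul]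
      refine Finset.sum_congr rfl (fun j _ => ?_); ring
    have h4 : (0:ℝ) ≤ ∑ j, (w₀ j * C) * (gpdf (m₀ j) (S₀ j) x * (1 + ‖x‖ ^ 2)) := by
      refine Finset.sum_nonneg (fun j _ => ?_)
      have hg := (gpdf_pos (m := m₀ j) (hS₀ j) x).le
      have h1x : (0:ℝ) ≤ 1 + ‖x‖ ^ 2 := by positivity
      exact mul_nonneg (mul_nonneg (hw₀ j) hC0) (mul_nonneg hg h1x)
    rw [Real.norm_eq_abs, abs_of_nonneg h4]
    rw [h3] at h2
    exact h2

lemma integrable_cd_mul_log_gmix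
    (hw₀ : ∀ j, 0 ≤ w₀ j) (hS₀ : ∀ j, (S₀ j).PosDef)
    (hw : ∀ j, 0 ≤ w j) (hw1 : (∑ j, w j) = 1) (hS : ∀ j, (S j).PosDef) :
    Integrable (fun x => clusterDensity w₀ m₀ S₀ x * Real.log (gmix w m S x)) := by
  have h : (fun x => clusterDensity w₀ m₀ S₀ x * Real.log (gmix w m S x)) =
      fun x => eta w₀ m₀ S₀ * (gmix w₀ m₀ S₀ x * Real.log (gmix w m S x)) := by
    funext x; rw [clusterDensity_eq_eta_mul_gmix]; ring
  rw [h]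
  exact (integrable_gmix_mul_log hw₀ hS₀ hw hw1 hS).const_mul _

lemma cd_mul_log_cd_eq
    (hw₀ : ∀ j, 0 ≤ w₀ j) (hw₀1 : (∑ j, w₀ j) = 1) (hS₀ : ∀ j, (S₀ j).PosDef)
    (hw : ∀ j, 0 ≤ w j) (hw1 : (∑ j, w j) = 1) (hS : ∀ j, (S j).PosDef) :
    (fun x => clusterDensity w₀ m₀ S₀ x * Real.log (clusterDensity w m S x)) =
      fun x => Real.log (eta w m S) * clusterDensity w₀ m₀ S₀ x +
        clusterDensity w₀ m₀ S₀ x * Real.log (gmix w m S x) := by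
  funext x
  rw [clusterDensity_eq_eta_mul_gmix w m S,
    Real.log_mul (eta_pos hw hw1 hS).ne' (gmix_pos hw hw1 hS x).ne']
  ring

lemma integral_cd_mul_log_cd
    (hw₀ : ∀ j, 0 ≤ w₀ j) (hw₀1 : (∑ j, w₀ j) = 1) (hS₀ : ∀ j, (S₀ j).PosDef)
    (hw : ∀ j, 0 ≤ w j) (hw1 : (∑ j, w j) = 1) (hS : ∀ j, (S j).PosDef) :
    ∫ x, clusterDensity w₀ m₀ S₀ x * Real.log (clusterDensity w m S x) =
      Real.log (eta w m S) +
        ∫ x, clusterDensity w₀ m₀ S₀ x * Real.log (gmix w m S x) := by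
  rw [cd_mul_log_cd_eq hw₀ hw₀1 hS₀ hw hw1 hS]
  rw [integral_add ((integrable_clusterDensity hS₀).const_mul _)
    (integrable_cd_mul_log_gmix hw₀ hS₀ hw hw1 hS)]
  rw [integral_const_mul, integral_clusterDensity hw₀ hw₀1 hS₀, mul_one]

lemma integrable_cd_mul_log_cd
    (hw₀ : ∀ j, 0 ≤ w₀ j) (hw₀1 : (∑ j, w₀ j) = 1) (hS₀ : ∀ j, (S₀ j).PosDef)
    (hw : ∀ j, 0 ≤ w j) (hw1 : (∑ j, w j) = 1) (hS : ∀ j, (S j).PosDef) :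
    Integrable (fun x => clusterDensity w₀ m₀ S₀ x * Real.log (clusterDensity w m S x)) := by
  rw [cd_mul_log_cd_eq hw₀ hw₀1 hS₀ hw hw1 hS]
  exact ((integrable_clusterDensity hS₀).const_mul _).add
    (integrable_cd_mul_log_gmix hw₀ hS₀ hw hw1 hS)

/-- Gibbs' inequality for the cluster densities. -/
lemma gibbs_core
    (hw₀ : ∀ j, 0 ≤ w₀ j) (hw₀1 : (∑ j, w₀ j) = 1) (hS₀ : ∀ j, (S₀ j).PosDef)
    (hw : ∀ j, 0 ≤ w j) (hw1 : (∑ j, w j) = 1) (hS : ∀ j, (S j).PosDef) :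
    ∫ x, clusterDensity w₀ m₀ S₀ x * Real.log (clusterDensity w m S x) ≤
      ∫ x, clusterDensity w₀ m₀ S₀ x * Real.log (clusterDensity w₀ m₀ S₀ x) := by
  have I1 := integrable_cd_mul_log_cd (m₀ := m₀) (m := m) hw₀ hw₀1 hS₀ hw hw1 hS
  have I0 := integrable_cd_mul_log_cd (m₀ := m₀) (m := m₀) hw₀ hw₀1 hS₀ hw₀ hw₀1 hS₀
  have Icd := integrable_clusterDensity (w := w) (m := m) hS
  have Icd₀ := integrable_clusterDensity (w := w₀) (m := m₀) hS₀
  have key : ∫ x, (clusterDensity w₀ m₀ S₀ x * Real.log (clusterDensity w m S x) -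
      clusterDensity w₀ m₀ S₀ x * Real.log (clusterDensity w₀ m₀ S₀ x)) ≤
      ∫ x, (clusterDensity w m S x - clusterDensity w₀ m₀ S₀ x) := by
    refine integral_mono (I1.sub I0) (Icd.sub Icd₀) (fun x => ?_)
    set a := clusterDensity w₀ m₀ S₀ x with ha
    set b := clusterDensity w m S x with hb
    have ha0 : 0 < a := clusterDensity_pos hw₀ hw₀1 hS₀ x
    have hb0 : 0 < b := clusterDensity_pos hw hw1 hS x
    have h1 : Real.log (b / a) ≤ b / a - 1 := Real.log_le_sub_one_of_pos (div_pos hb0 ha0)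
    rw [Real.log_div hb0.ne' ha0.ne'] at h1
    have h2 := mul_le_mul_of_nonneg_left h1 ha0.le
    calc a * Real.log b - a * Real.log a = a * (Real.log b - Real.log a) := by ring
      _ ≤ a * (b / a - 1) := h2
      _ = b - a := by field_simp
  rw [integral_sub I1 I0, integral_sub Icd Icd₀,
    integral_clusterDensity hw hw1 hS, integral_clusterDensity hw₀ hw₀1 hS₀] at key
  linarith

lemma gibbs_final
    (hw₀ : ∀ j, 0 ≤ w₀ j) (hw₀1 : (∑ j, w₀ j) = 1) (hS₀ : ∀ j, (S₀ j).PosDef)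
    (hw : ∀ j, 0 ≤ w j) (hw1 : (∑ j, w j) = 1) (hS : ∀ j, (S j).PosDef) :
    (∫ x, clusterDensity w₀ m₀ S₀ x * Real.log (gmix w₀ m₀ S₀ x)) -
      (∫ x, clusterDensity w₀ m₀ S₀ x * Real.log (gmix w m S x)) ≥
      Real.log (eta w m S) - Real.log (eta w₀ m₀ S₀) := by
  have key := gibbs_core (m₀ := m₀) (m := m) hw₀ hw₀1 hS₀ hw hw1 hS
  rw [integral_cd_mul_log_cd hw₀ hw₀1 hS₀ hw hw1 hS,
    integral_cd_mul_log_cd hw₀ hw₀1 hS₀ hw₀ hw₀1 hS₀] at key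
  linarith

end gibbs

section assembly
variable {p k : ℕ} {w : Fin k → ℝ} {m : Fin k → Fin p → ℝ}
  {S : Fin k → Matrix (Fin p) (Fin p) ℝ}

lemma sum_setIntegral_log (P : Measure (Fin p → ℝ))
    (hw1 : (∑ j, w j) = 1)
    (hint : Integrable (fun x => Real.log (gmix w m S x)) P) :
    ∑ j, ∫ x in Zpart w m S j, Real.log (w j * gpdf (m j) (S j) x) ∂P =
      ∫ x, Real.log (gmix w m S x) ∂P := by
  have : Nonempty (Fin k) := nonempty_of_sum_one hw1
  have hstep : ∀ j, ∫ x in Zpart w m S j, Real.log (w j * gpdf (m j) (S j) x) ∂P =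
      ∫ x in Zpart w m S j, Real.log (gmix w m S x) ∂P := by
    intro j
    refine setIntegral_congr_fun (measurableSet_Zpart w m S j) (fun x hx => ?_)
    rw [gmix_eq_on_Zpart hx]
  rw [Finset.sum_congr rfl (fun j _ => hstep j)]
  rw [← integral_iUnion_fintype (measurableSet_Zpart w m S) Zpart_disjoint
    (fun j => hint.integrableOn)]
  have huniv : (⋃ j, Zpart w m S j) = Set.univ := by
    refine Set.eq_univ_of_forall (fun x => ?_)
    obtain ⟨j, hj⟩ := exists_mem_Zpart w m S x
    exact Set.mem_iUnion.2 ⟨j, hj⟩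
  rw [huniv, setIntegral_univ]

end assembly

/-- **Proposition 1** (overlap-penalized optimality of the true parameters). For `P₀` with
density `f₀(x) = η(θ⁰,π⁰) ∑ⱼ 1_{Z_j(θ⁰,π⁰)}(x) πⱼ⁰ φ(x;θⱼ⁰)` and any other configuration
`(k,θ,π)`, the difference of the classification log-likelihoods is at least
`log(η(θ,π)/η(θ⁰,π⁰))`. -/
theorem prop1_overlap_penalized {p k₀ k : ℕ}
    (w₀ : Fin k₀ → ℝ) (m₀ : Fin k₀ → Fin p → ℝ) (S₀ : Fin k₀ → Matrix (Fin p) (Fin p) ℝ)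
    (hw₀ : ∀ j, 0 < w₀ j) (hw₀1 : (∑ j, w₀ j) = 1) (hS₀ : ∀ j, (S₀ j).PosDef)
    (P₀ : Measure (Fin p → ℝ))
    (hP₀ : P₀ = volume.withDensity (fun x => ENNReal.ofReal (clusterDensity w₀ m₀ S₀ x)))
    (w : Fin k → ℝ) (m : Fin k → Fin p → ℝ) (S : Fin k → Matrix (Fin p) (Fin p) ℝ)
    (hw : ∀ j, 0 ≤ w j) (hw1 : (∑ j, w j) = 1) (hS : ∀ j, (S j).PosDef) :
    (∑ j, ∫ x in Zpart w₀ m₀ S₀ j, Real.log (w₀ j * gpdf (m₀ j) (S₀ j) x) ∂P₀) -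
      (∑ j, ∫ x in Zpart w m S j, Real.log (w j * gpdf (m j) (S j) x) ∂P₀) ≥
      Real.log (eta w m S / eta w₀ m₀ S₀) := by
  have hw₀' : ∀ j, 0 ≤ w₀ j := fun j => (hw₀ j).le
  set f₀ := clusterDensity w₀ m₀ S₀ with hf₀
  have hf₀nonneg : ∀ x, 0 ≤ f₀ x := fun x => (clusterDensity_pos hw₀' hw₀1 hS₀ x).le
  have hmeas₀ : Measurable fun x => (f₀ x).toNNReal :=
    (clusterDensity_measurable w₀ m₀ S₀).real_toNNReal
  have hdens : (fun x => ENNReal.ofReal (f₀ x)) = fun x => ((f₀ x).toNNReal : ℝ≥0∞) := rfl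
  -- transfer of integrals from P₀ to volume
  have htrans : ∀ h : (Fin p → ℝ) → ℝ, ∫ x, h x ∂P₀ = ∫ x, f₀ x * h x := by
    intro h
    rw [hP₀, hdens, integral_withDensity_eq_integral_smul hmeas₀ h]
    congr 1
    funext x
    rw [NNReal.smul_def, smul_eq_mul, Real.coe_toNNReal _ (hf₀nonneg x)]
  -- integrability of log-mixtures w.r.t. P₀
  have hintP : ∀ {k' : ℕ} (w' : Fin k' → ℝ) (m' : Fin k' → Fin p → ℝ)
      (S' : Fin k' → Matrix (Fin p) (Fin p) ℝ), (∀ j, 0 ≤ w' j) → (∑ j, w' j) = 1 →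
      (∀ j, (S' j).PosDef) →
      Integrable (fun x => Real.log (gmix w' m' S' x)) P₀ := by
    intro k' w' m' S' hw' hw1' hS'
    rw [hP₀, hdens, integrable_withDensity_iff_integrable_smul hmeas₀]
    have heq : (fun x => (f₀ x).toNNReal • Real.log (gmix w' m' S' x)) =
        fun x => f₀ x * Real.log (gmix w' m' S' x) := by
      funext x
      rw [NNReal.smul_def, smul_eq_mul, Real.coe_toNNReal _ (hf₀nonneg x)]
    rw [heq]
    exact integrable_cd_mul_log_gmix hw₀' hS₀ hw' hw1' hS'
  have hA := sum_setIntegral_log (w := w₀) (m := m₀) (S := S₀) P₀ hw₀1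
    (hintP w₀ m₀ S₀ hw₀' hw₀1 hS₀)
  have hB := sum_setIntegral_log (w := w) (m := m) (S := S) P₀ hw1
    (hintP w m S hw hw1 hS)
  rw [hA, hB, htrans, htrans]
  have hfin := gibbs_final (m₀ := m₀) (m := m) hw₀' hw₀1 hS₀ hw hw1 hS
  rw [Real.log_div (eta_pos hw hw1 hS).ne' (eta_pos hw₀' hw₀1 hS₀).ne']
  exact hfin
end

section
/- Equivalence of TCLUST with k = 1 and the MCD: for a probability measure P on ℝᵖ, a trimming level α ∈ (0,1), and a measurable set Z with P[Z] = 1−α, the maximization over (μ, Σ) of P[1_Z(·) log φ(·; μ, Σ)] is achieved at μ = μ(Z) and Σ = Σ(Z) (the trimmed mean and trimmed covariance over Z), and the resulting maximal value equals −(1/2)[(1−α) p log(2π) + (1−α) log|Σ(Z)| + (1−α)p]. Consequently, maximizing over Z with P[Z] = 1−α is equivalent to minimizing the determinant |Σ(Z)| over such sets Z, which is the MCD population objective. -/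
open MeasureTheory Matrix
open Finset

/-- The trimmed mean `μ(Z) = (1/(1−α)) ∫_Z x dP(x)`. -/
noncomputable def trimMean {p : ℕ} (P : Measure (Fin p → ℝ)) (α : ℝ)
    (Z : Set (Fin p → ℝ)) : Fin p → ℝ :=
  (1 / (1 - α)) • ∫ x in Z, x ∂P

/-- The trimmed covariance `Σ(Z) = (1/(1−α)) ∫_Z (x−μ(Z))(x−μ(Z))ᵀ dP(x)`. -/
noncomputable def trimCov {p : ℕ} (P : Measure (Fin p → ℝ)) (α : ℝ)
    (Z : Set (Fin p → ℝ)) : Matrix (Fin p) (Fin p) ℝ :=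
  Matrix.of fun i j =>
    (1 / (1 - α)) * ∫ x in Z, (x i - trimMean P α Z i) * (x j - trimMean P α Z j) ∂P

/-- The profiled trimmed Gaussian log-likelihood of the region `Z`. -/
noncomputable def mcdVal {p : ℕ} (P : Measure (Fin p → ℝ)) (α : ℝ)
    (Z : Set (Fin p → ℝ)) : ℝ :=
  ∫ x in Z, Real.log (gpdf (trimMean P α Z) (trimCov P α Z) x) ∂P


lemma trace_eq_sum_eig {p : ℕ} {B : Matrix (Fin p) (Fin p) ℝ} (hH : B.IsHermitian) :
    B.trace = ∑ i, hH.eigenvalues i := by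
  rw [hH.trace_eq_sum_eigenvalues]
  simp

lemma log_det_le {p : ℕ} {B : Matrix (Fin p) (Fin p) ℝ} (hB : B.PosDef) :
    Real.log B.det ≤ B.trace - p := by
  rw [hB.isHermitian.det_eq_prod_eigenvalues, trace_eq_sum_eig hB.isHermitian]
  simp only [RCLike.ofReal_real_eq_id, Function.id_def]
  rw [Real.log_prod (fun i _ => (hB.eigenvalues_pos i).ne')]
  have : ∀ i ∈ univ (α := Fin p), Real.log (hB.isHermitian.eigenvalues i) ≤
      hB.isHermitian.eigenvalues i - 1 :=
    fun i _ => Real.log_le_sub_one_of_pos (hB.eigenvalues_pos i)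
  calc ∑ i, Real.log (hB.isHermitian.eigenvalues i)
      ≤ ∑ i, (hB.isHermitian.eigenvalues i - 1) := Finset.sum_le_sum this
    _ = ∑ i, hB.isHermitian.eigenvalues i - p := by rw [Finset.sum_sub_distrib]; simp

lemma conj_posdef {p : ℕ} {R S : Matrix (Fin p) (Fin p) ℝ} (hR : R.IsHermitian)
    (hRdet : R.det ≠ 0) (hS : S.PosDef) : (R * S * R).PosDef := by
  refine Matrix.PosDef.of_dotProduct_mulVec_pos ?_ ?_
  · have := isHermitian_conjTranspose_mul_mul R hS.isHermitian
    rwa [hR.eq] at this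
  · intro x hx
    have hRx : R *ᵥ x ≠ 0 := by
      intro h
      apply hx
      have hinv : Invertible R := R.invertibleOfIsUnitDet (Ne.isUnit hRdet)
      have := congrArg (fun v => R⁻¹ *ᵥ v) h
      simpa [Matrix.mulVec_mulVec, Matrix.nonsing_inv_mul R (Ne.isUnit hRdet)] using this
    have := hS.dotProduct_mulVec_pos hRx
    have hrw : star x ⬝ᵥ (R * S * R) *ᵥ x = star (R *ᵥ x) ⬝ᵥ S *ᵥ (R *ᵥ x) := by
      rw [star_mulVec, dotProduct_mulVec, ← hR.eq]
      simp only [← Matrix.mulVec_mulVec, Matrix.vecMul_vecMul, dotProduct_mulVec, hR.eq]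
    rw [hrw]
    exact this

open scoped MatrixOrder in
lemma key_ineq {p : ℕ} {S T : Matrix (Fin p) (Fin p) ℝ} (hS : S.PosDef) (hT : T.PosDef) :
    Real.log T.det + p ≤ Real.log S.det + (S⁻¹ * T).trace := by
  set R := CFC.sqrt T with hRdef
  have hRH : R.IsHermitian := (Matrix.nonneg_iff_posSemidef.mp (CFC.sqrt_nonneg T)).isHermitian
  have hRsq : R * R = T := CFC.sqrt_mul_sqrt_self T (Matrix.nonneg_iff_posSemidef.mpr hT.posSemidef)
  have hRR : R.det * R.det = T.det := by rw [← Matrix.det_mul, hRsq]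
  have hRdet : R.det ≠ 0 := by
    intro h; rw [h] at hRR; simp at hRR; exact hT.det_pos.ne' hRR.symm
  have hB : (R * S⁻¹ * R).PosDef := conj_posdef hRH hRdet hS.inv
  have htr : (R * S⁻¹ * R).trace = (S⁻¹ * T).trace := by
    rw [Matrix.trace_mul_cycle, hRsq, Matrix.trace_mul_comm]
  have hdet : (R * S⁻¹ * R).det = T.det / S.det := by
    rw [Matrix.det_mul, Matrix.det_mul, Matrix.det_nonsing_inv, Ring.inverse_eq_inv', div_eq_mul_inv, ← hRR]
    ring
  have hlog := log_det_le hB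
  rw [hdet, htr, Real.log_div hT.det_pos.ne' hS.det_pos.ne'] at hlog
  linarith

lemma log_gpdf {p : ℕ} (m : Fin p → ℝ) {S : Matrix (Fin p) (Fin p) ℝ} (hS : S.PosDef)
    (x : Fin p → ℝ) :
    Real.log (gpdf m S x) = (-(p : ℝ) / 2) * Real.log (2 * Real.pi)
      + (-(1 : ℝ) / 2) * Real.log S.det
      + (-(1 / 2)) * ((x - m) ⬝ᵥ (S⁻¹ *ᵥ (x - m))) := by
  have h2pi : (0:ℝ) < 2 * Real.pi := by positivity
  have h1 : (0:ℝ) < (2 * Real.pi) ^ (-(p : ℝ) / 2) := Real.rpow_pos_of_pos h2pi _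
  have h2 : (0:ℝ) < S.det ^ (-(1 : ℝ) / 2) := Real.rpow_pos_of_pos hS.det_pos _
  rw [gpdf, Real.log_mul (by positivity) (Real.exp_ne_zero _), Real.log_mul h1.ne' h2.ne',
    Real.log_exp, Real.log_rpow h2pi, Real.log_rpow hS.det_pos]

section IntLemmas
variable {p : ℕ} (P : Measure (Fin p → ℝ)) [IsProbabilityMeasure P] (α : ℝ)
  (Z : Set (Fin p → ℝ))

lemma coord_int (hint1 : Integrable (fun x => x) (P.restrict Z)) (i : Fin p) :
    Integrable (fun x : Fin p → ℝ => x i) (P.restrict Z) :=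
  (ContinuousLinearMap.proj (R := ℝ) (φ := fun _ : Fin p => ℝ) i).integrable_comp hint1

lemma mean_coord (hα1 : α < 1) (hint1 : Integrable (fun x => x) (P.restrict Z)) (i : Fin p) :
    ∫ x in Z, x i ∂P = (1 - α) * trimMean P α Z i := by
  have h := ((ContinuousLinearMap.proj (R := ℝ) (φ := fun _ : Fin p => ℝ) i).integral_comp_comm
    hint1).symm
  have h1 : (0:ℝ) < 1 - α := by linarith
  have h2 : (∫ x in Z, x ∂P) i = ∫ x in Z, x i ∂P := h
  rw [← h2]
  simp only [trimMean, Pi.smul_apply, smul_eq_mul]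
  field_simp

lemma centered_int (hα1 : α < 1) (hZ : MeasurableSet Z)
    (hZα : P Z = ENNReal.ofReal (1 - α))
    (hint1 : Integrable (fun x => x) (P.restrict Z)) (i : Fin p) :
    ∫ x in Z, (x i - trimMean P α Z i) ∂P = 0 := by
  have h1 : (0:ℝ) < 1 - α := by linarith
  rw [integral_sub (coord_int P Z hint1 i) (integrable_const _), mean_coord P α Z hα1 hint1 i,
    setIntegral_const, measureReal_def, hZα, ENNReal.toReal_ofReal h1.le]
  simp [smul_eq_mul]

lemma cov_int (hα1 : α < 1)
    (hint2 : ∀ i j, Integrable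
      (fun x => (x i - trimMean P α Z i) * (x j - trimMean P α Z j)) (P.restrict Z))
    (i j : Fin p) :
    ∫ x in Z, (x i - trimMean P α Z i) * (x j - trimMean P α Z j) ∂P
      = (1 - α) * trimCov P α Z i j := by
  have h1 : (1:ℝ) - α ≠ 0 := by intro h; linarith [h]
  simp only [trimCov, Matrix.of_apply]
  field_simp

lemma trimCov_symm (i j : Fin p) : trimCov P α Z j i = trimCov P α Z i j := by
  simp only [trimCov, Matrix.of_apply]
  congr 1
  refine integral_congr_ae (Filter.Eventually.of_forall fun x => ?_)
  ring

lemma shift_decomp (m : Fin p → ℝ) (i j : Fin p) (x : Fin p → ℝ) :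
    (x i - m i) * (x j - m j)
      = (x i - trimMean P α Z i) * (x j - trimMean P α Z j)
        + (trimMean P α Z j - m j) * (x i - trimMean P α Z i)
        + (trimMean P α Z i - m i) * (x j - trimMean P α Z j)
        + (trimMean P α Z i - m i) * (trimMean P α Z j - m j) := by ring

lemma shift_int (hint1 : Integrable (fun x => x) (P.restrict Z))
    (hint2 : ∀ i j, Integrable
      (fun x => (x i - trimMean P α Z i) * (x j - trimMean P α Z j)) (P.restrict Z))
    (m : Fin p → ℝ) (i j : Fin p) :
    Integrable (fun x => (x i - m i) * (x j - m j)) (P.restrict Z) := by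
  have hci : Integrable (fun x : Fin p → ℝ => x i - trimMean P α Z i) (P.restrict Z) :=
    (coord_int P Z hint1 i).sub (integrable_const _)
  have hcj : Integrable (fun x : Fin p → ℝ => x j - trimMean P α Z j) (P.restrict Z) :=
    (coord_int P Z hint1 j).sub (integrable_const _)
  have heq : (fun x : Fin p → ℝ => (x i - m i) * (x j - m j))
      = fun x => (x i - trimMean P α Z i) * (x j - trimMean P α Z j)
        + (trimMean P α Z j - m j) * (x i - trimMean P α Z i)
        + (trimMean P α Z i - m i) * (x j - trimMean P α Z j)
        + (trimMean P α Z i - m i) * (trimMean P α Z j - m j) :=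
    funext fun x => shift_decomp P α Z m i j x
  rw [heq]
  exact (((hint2 i j).add (hci.const_mul _)).add (hcj.const_mul _)).add (integrable_const _)

lemma shift_moment (hα1 : α < 1) (hZ : MeasurableSet Z)
    (hZα : P Z = ENNReal.ofReal (1 - α))
    (hint1 : Integrable (fun x => x) (P.restrict Z))
    (hint2 : ∀ i j, Integrable
      (fun x => (x i - trimMean P α Z i) * (x j - trimMean P α Z j)) (P.restrict Z))
    (m : Fin p → ℝ) (i j : Fin p) :
    ∫ x in Z, (x i - m i) * (x j - m j) ∂P
      = (1 - α) * (trimCov P α Z i j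
          + (trimMean P α Z i - m i) * (trimMean P α Z j - m j)) := by
  have h1 : (0:ℝ) < 1 - α := by linarith
  have hci : Integrable (fun x : Fin p → ℝ => x i - trimMean P α Z i) (P.restrict Z) :=
    (coord_int P Z hint1 i).sub (integrable_const _)
  have hcj : Integrable (fun x : Fin p → ℝ => x j - trimMean P α Z j) (P.restrict Z) :=
    (coord_int P Z hint1 j).sub (integrable_const _)
  have heq : (fun x : Fin p → ℝ => (x i - m i) * (x j - m j))
      = fun x => (x i - trimMean P α Z i) * (x j - trimMean P α Z j)
        + (trimMean P α Z j - m j) * (x i - trimMean P α Z i)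
        + (trimMean P α Z i - m i) * (x j - trimMean P α Z j)
        + (trimMean P α Z i - m i) * (trimMean P α Z j - m j) :=
    funext fun x => shift_decomp P α Z m i j x
  have hA := hint2 i j
  have hB : Integrable (fun x : Fin p → ℝ =>
      (trimMean P α Z j - m j) * (x i - trimMean P α Z i)) (P.restrict Z) := hci.const_mul _
  have hC : Integrable (fun x : Fin p → ℝ =>
      (trimMean P α Z i - m i) * (x j - trimMean P α Z j)) (P.restrict Z) := hcj.const_mul _
  have hAB : Integrable (fun x : Fin p → ℝ =>
      (x i - trimMean P α Z i) * (x j - trimMean P α Z j)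
        + (trimMean P α Z j - m j) * (x i - trimMean P α Z i)) (P.restrict Z) := hA.add hB
  have hABC : Integrable (fun x : Fin p → ℝ =>
      (x i - trimMean P α Z i) * (x j - trimMean P α Z j)
        + (trimMean P α Z j - m j) * (x i - trimMean P α Z i)
        + (trimMean P α Z i - m i) * (x j - trimMean P α Z j)) (P.restrict Z) := hAB.add hC
  rw [heq, integral_add hABC (integrable_const _),
    integral_add hAB hC,
    integral_add hA hB,
    integral_const_mul, integral_const_mul,
    centered_int P α Z hα1 hZ hZα hint1 i, centered_int P α Z hα1 hZ hZα hint1 j,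
    cov_int P α Z hα1 hint2 i j, setIntegral_const, measureReal_def, hZα, ENNReal.toReal_ofReal h1.le]
  simp only [smul_eq_mul]
  ring


lemma quad_decomp (m : Fin p → ℝ) (S : Matrix (Fin p) (Fin p) ℝ) (x : Fin p → ℝ) :
    (x - m) ⬝ᵥ (S⁻¹ *ᵥ (x - m))
      = ∑ i, ∑ j, S⁻¹ i j * ((x i - m i) * (x j - m j)) := by
  simp only [dotProduct, Matrix.mulVec, dotProduct, Pi.sub_apply, Finset.mul_sum]
  exact Finset.sum_congr rfl fun i _ => Finset.sum_congr rfl fun j _ => by ring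

lemma quad_int (hint1 : Integrable (fun x => x) (P.restrict Z))
    (hint2 : ∀ i j, Integrable
      (fun x => (x i - trimMean P α Z i) * (x j - trimMean P α Z j)) (P.restrict Z))
    (m : Fin p → ℝ) (S : Matrix (Fin p) (Fin p) ℝ) :
    Integrable (fun x => (x - m) ⬝ᵥ (S⁻¹ *ᵥ (x - m))) (P.restrict Z) := by
  have heq : (fun x : Fin p → ℝ => (x - m) ⬝ᵥ (S⁻¹ *ᵥ (x - m)))
      = fun x => ∑ i, ∑ j, S⁻¹ i j * ((x i - m i) * (x j - m j)) :=
    funext fun x => quad_decomp m S x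
  rw [heq]
  exact integrable_finset_sum _ fun i _ => integrable_finset_sum _ fun j _ =>
    (shift_int P α Z hint1 hint2 m i j).const_mul _

lemma quad_val (hα1 : α < 1) (hZ : MeasurableSet Z)
    (hZα : P Z = ENNReal.ofReal (1 - α))
    (hint1 : Integrable (fun x => x) (P.restrict Z))
    (hint2 : ∀ i j, Integrable
      (fun x => (x i - trimMean P α Z i) * (x j - trimMean P α Z j)) (P.restrict Z))
    (m : Fin p → ℝ) (S : Matrix (Fin p) (Fin p) ℝ) :
    ∫ x in Z, (x - m) ⬝ᵥ (S⁻¹ *ᵥ (x - m)) ∂P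
      = (1 - α) * ((S⁻¹ * trimCov P α Z).trace
          + (trimMean P α Z - m) ⬝ᵥ (S⁻¹ *ᵥ (trimMean P α Z - m))) := by
  have heq : (fun x : Fin p → ℝ => (x - m) ⬝ᵥ (S⁻¹ *ᵥ (x - m)))
      = fun x => ∑ i, ∑ j, S⁻¹ i j * ((x i - m i) * (x j - m j)) :=
    funext fun x => quad_decomp m S x
  rw [heq, integral_finset_sum _ (μ := P.restrict Z) (f := fun i (x : Fin p → ℝ) => ∑ j, S⁻¹ i j * ((x i - m i) * (x j - m j))) (fun i _ => integrable_finset_sum _ fun j _ =>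
    (shift_int P α Z hint1 hint2 m i j).const_mul _)]
  have hterm : ∀ i, ∫ x in Z, ∑ j, S⁻¹ i j * ((x i - m i) * (x j - m j)) ∂P
      = ∑ j, S⁻¹ i j * ((1 - α) * (trimCov P α Z i j
          + (trimMean P α Z i - m i) * (trimMean P α Z j - m j))) := by
    intro i
    rw [integral_finset_sum _ (μ := P.restrict Z) (f := fun j (x : Fin p → ℝ) => S⁻¹ i j * ((x i - m i) * (x j - m j))) (fun j _ => (shift_int P α Z hint1 hint2 m i j).const_mul _)]
    exact Finset.sum_congr rfl fun j _ => by
      rw [integral_const_mul, shift_moment P α Z hα1 hZ hZα hint1 hint2 m i j]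
  simp only [hterm]
  rw [Matrix.trace, quad_decomp]
  simp only [Matrix.diag, Matrix.mul_apply, Finset.mul_sum, Matrix.of_apply,
    ← Finset.sum_add_distrib]
  refine Finset.sum_congr rfl fun i _ => Finset.sum_congr rfl fun j _ => ?_
  rw [trimCov_symm P α Z i j]
  ring


lemma loglik_val (hα1 : α < 1) (hZ : MeasurableSet Z)
    (hZα : P Z = ENNReal.ofReal (1 - α))
    (hint1 : Integrable (fun x => x) (P.restrict Z))
    (hint2 : ∀ i j, Integrable
      (fun x => (x i - trimMean P α Z i) * (x j - trimMean P α Z j)) (P.restrict Z))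
    (m : Fin p → ℝ) {S : Matrix (Fin p) (Fin p) ℝ} (hS : S.PosDef) :
    ∫ x in Z, Real.log (gpdf m S x) ∂P
      = -(1/2) * ((1 - α) * p * Real.log (2 * Real.pi) + (1 - α) * Real.log S.det
          + (1 - α) * ((S⁻¹ * trimCov P α Z).trace
              + (trimMean P α Z - m) ⬝ᵥ (S⁻¹ *ᵥ (trimMean P α Z - m)))) := by
  have h1 : (0:ℝ) < 1 - α := by linarith
  have heq : (fun x : Fin p → ℝ => Real.log (gpdf m S x))
      = fun x => ((-(p : ℝ) / 2) * Real.log (2 * Real.pi)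
          + (-(1 : ℝ) / 2) * Real.log S.det)
        + (-(1 / 2)) * ((x - m) ⬝ᵥ (S⁻¹ *ᵥ (x - m))) := by
    funext x
    rw [log_gpdf m hS x]
  rw [heq, integral_add (integrable_const _)
      ((quad_int P α Z hint1 hint2 m S).const_mul _),
    integral_const_mul, quad_val P α Z hα1 hZ hZα hint1 hint2 m S,
    setIntegral_const, measureReal_def, hZα, ENNReal.toReal_ofReal h1.le]
  simp only [smul_eq_mul]
  ring


lemma mcdVal_eq (hα1 : α < 1) (hZ : MeasurableSet Z)
    (hZα : P Z = ENNReal.ofReal (1 - α))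
    (hint1 : Integrable (fun x => x) (P.restrict Z))
    (hint2 : ∀ i j, Integrable
      (fun x => (x i - trimMean P α Z i) * (x j - trimMean P α Z j)) (P.restrict Z))
    (hpd : (trimCov P α Z).PosDef) :
    mcdVal P α Z = -(1 / 2) * ((1 - α) * p * Real.log (2 * Real.pi) +
      (1 - α) * Real.log (trimCov P α Z).det + (1 - α) * p) := by
  rw [mcdVal, loglik_val P α Z hα1 hZ hZα hint1 hint2 (trimMean P α Z) hpd]
  have htr : ((trimCov P α Z)⁻¹ * trimCov P α Z).trace = (p : ℝ) := by
    rw [Matrix.nonsing_inv_mul _ hpd.det_pos.ne'.isUnit, Matrix.trace_one]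
    simp
  have hdot : (trimMean P α Z - trimMean P α Z) ⬝ᵥ
      ((trimCov P α Z)⁻¹ *ᵥ (trimMean P α Z - trimMean P α Z)) = 0 := by
    simp
  rw [htr, hdot]
  ring

end IntLemmas


/-- **Equivalence of TCLUST with `k = 1` and the MCD.** For a trimming region `Z` of
`P`-mass `1−α`, the maximization over `(μ,Σ)` of `∫_Z log φ(·;μ,Σ) dP` is achieved at the
trimmed mean and covariance `(μ(Z),Σ(Z))`, the maximal value equals
`−(1/2)[(1−α)p log(2π) + (1−α) log|Σ(Z)| + (1−α)p]`, and consequently comparing two such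
regions `Z`, `Z'` by this maximal value is equivalent to comparing the determinants
`|Σ(Z)|`, `|Σ(Z')|` in the opposite order (the MCD objective). -/
theorem tclust_k1_eq_mcd {p : ℕ} (P : Measure (Fin p → ℝ)) [IsProbabilityMeasure P]
    (α : ℝ) (hα : 0 < α) (hα1 : α < 1)
    (Z Z' : Set (Fin p → ℝ)) (hZ : MeasurableSet Z) (hZ' : MeasurableSet Z')
    (hZα : P Z = ENNReal.ofReal (1 - α)) (hZ'α : P Z' = ENNReal.ofReal (1 - α))
    (hint1 : Integrable (fun x => x) (P.restrict Z))
    (hint1' : Integrable (fun x => x) (P.restrict Z'))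
    (hint2 : ∀ i j, Integrable
      (fun x => (x i - trimMean P α Z i) * (x j - trimMean P α Z j)) (P.restrict Z))
    (hint2' : ∀ i j, Integrable
      (fun x => (x i - trimMean P α Z' i) * (x j - trimMean P α Z' j)) (P.restrict Z'))
    (hpd : (trimCov P α Z).PosDef) (hpd' : (trimCov P α Z').PosDef) :
    (∀ (m : Fin p → ℝ) (S : Matrix (Fin p) (Fin p) ℝ), S.PosDef →
        ∫ x in Z, Real.log (gpdf m S x) ∂P ≤ mcdVal P α Z) ∧
      mcdVal P α Z = -(1 / 2) * ((1 - α) * p * Real.log (2 * Real.pi) +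
        (1 - α) * Real.log (trimCov P α Z).det + (1 - α) * p) ∧
      ((trimCov P α Z').det ≤ (trimCov P α Z).det ↔ mcdVal P α Z ≤ mcdVal P α Z') := by
  have h1α : (0:ℝ) < 1 - α := by linarith
  have hm : mcdVal P α Z = -(1 / 2) * ((1 - α) * p * Real.log (2 * Real.pi) +
      (1 - α) * Real.log (trimCov P α Z).det + (1 - α) * p) :=
    mcdVal_eq P α Z hα1 hZ hZα hint1 hint2 hpd
  have hm' : mcdVal P α Z' = -(1 / 2) * ((1 - α) * p * Real.log (2 * Real.pi) +
      (1 - α) * Real.log (trimCov P α Z').det + (1 - α) * p) :=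
    mcdVal_eq P α Z' hα1 hZ' hZ'α hint1' hint2' hpd'
  refine ⟨?_, hm, ?_⟩
  · intro m S hS
    rw [loglik_val P α Z hα1 hZ hZα hint1 hint2 m hS, hm]
    have hkey := key_ineq hS hpd
    have hqd : 0 ≤ (trimMean P α Z - m) ⬝ᵥ (S⁻¹ *ᵥ (trimMean P α Z - m)) := by
      have := hS.inv.posSemidef.dotProduct_mulVec_nonneg (trimMean P α Z - m)
      simpa using this
    nlinarith [mul_le_mul_of_nonneg_left hkey h1α.le, mul_nonneg h1α.le hqd]
  · have hlog := Real.log_le_log_iff hpd'.det_pos hpd.det_pos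
    rw [hm, hm']
    constructor
    · intro h
      have h2 : Real.log (trimCov P α Z').det ≤ Real.log (trimCov P α Z).det := hlog.2 h
      nlinarith [mul_le_mul_of_nonneg_left h2 h1α.le]
    · intro h
      refine hlog.1 ?_
      nlinarith [h]
end
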